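/- Let A and B be unital complex Banach algebras, let 𝔄 and 𝔅 be open subgroups of A⁻¹ and B⁻¹ respectively, and let T : 𝔄 → 𝔅 be a surjective isometry. Then there exists u₀ ∈ rad(B) such that T(a) converges to u₀ as a tends to 0 along 𝔄; that is, the limit lim_{𝔄 ∋ a → 0} T(a) exists and lies in the Jacobson radical of B. -/

import Mathlib

-- ===== part 1 =====
open Filter Metric

/-- Real induction on `[0,1]` going upward. -/
lemma real_induction_up {P : ℝ → Prop} (h0 : P 0)
    (hopen : ∀ t, 0 ≤ t → t < 1 → P t → ∃ ε > 0, ∀ s, t ≤ s → s ≤ t + ε → s ≤ 1 → P s)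
    (hlim : ∀ t, 0 < t → t ≤ 1 → (∀ s, 0 ≤ s → s < t → P s) → P t) :
    ∀ t, 0 ≤ t → t ≤ 1 → P t := by
  set X : Set ℝ := {t | 0 ≤ t ∧ t ≤ 1 ∧ ∀ s, 0 ≤ s → s ≤ t → P s} with hX
  have hne : (0:ℝ) ∈ X := by
    refine ⟨le_refl _, by norm_num, fun s hs hs' => ?_⟩
    have : s = 0 := le_antisymm hs' hs
    simpa [this] using h0
  have hbdd : BddAbove X := ⟨1, fun t ht => ht.2.1⟩
  set u := sSup X with hu
  have hu0 : 0 ≤ u := le_csSup hbdd hne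
  have hu1 : u ≤ 1 := csSup_le ⟨0, hne⟩ (fun t ht => ht.2.1)
  have hlt : ∀ s, 0 ≤ s → s < u → P s := by
    intro s hs hsu
    obtain ⟨t, htX, hts⟩ := exists_lt_of_lt_csSup ⟨0, hne⟩ hsu
    exact htX.2.2 s hs hts.le
  have hPu : P u := by
    rcases eq_or_lt_of_le hu0 with h|h
    · simpa [← h] using h0
    · exact hlim u h hu1 hlt
  have huX : u ∈ X := by
    refine ⟨hu0, hu1, fun s hs hsu => ?_⟩
    rcases eq_or_lt_of_le hsu with h|h
    · simpa [h] using hPu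
    · exact hlt s hs h
  rcases eq_or_lt_of_le hu1 with h|h
  · intro t ht ht1
    exact huX.2.2 t ht (by simpa [h] using ht1)
  · exfalso
    obtain ⟨ε, hε, hstep⟩ := hopen u hu0 h hPu
    have hmem : min 1 (u + ε) ∈ X := by
      refine ⟨le_trans hu0 (le_min hu1 (by linarith)), min_le_left _ _, fun s hs hsmin => ?_⟩
      rcases le_or_gt s u with h'|h'
      · exact huX.2.2 s hs h'
      · exact hstep s h'.le (le_trans hsmin (min_le_right _ _))
          (le_trans hsmin (min_le_left _ _))
    have : min 1 (u + ε) ≤ u := le_csSup hbdd hmem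
    have : (1:ℝ) ≤ u ∨ u + ε ≤ u := by
      rcases min_cases 1 (u+ε) with ⟨h1,_⟩|⟨h1,_⟩
      · left; rw [← h1]; exact this
      · right; rw [← h1]; exact this
    rcases this with h'|h' <;> linarith

/-- Real induction downward on `(0, t₀]`, where the predicate `Q t` means
"property holds on all of `[t, min t₀ 1]`-ish"; we phrase it abstractly. -/
lemma real_induction_down {Q : ℝ → Prop} {t₀ : ℝ} (ht₀ : 0 < t₀) (hbase : Q t₀)
    (hmono : ∀ s t, s ≤ t → t ≤ t₀ → 0 < s → Q s → Q t)
    (hopen : ∀ t, 0 < t → t ≤ t₀ → Q t → ∃ ε > 0, ∀ s, t - ε ≤ s → 0 < s → s ≤ t → Q s)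
    (hlim : ∀ t, 0 < t → t ≤ t₀ → (∀ s, t < s → s ≤ t₀ → Q s) → Q t) :
    ∀ t, 0 < t → t ≤ t₀ → Q t := by
  set X : Set ℝ := {t | 0 < t ∧ t ≤ t₀ ∧ ∀ s, t ≤ s → s ≤ t₀ → Q s} with hX
  have hne : t₀ ∈ X := ⟨ht₀, le_refl _, fun s hs hs' => by
    have : s = t₀ := le_antisymm hs' hs
    simpa [this] using hbase⟩
  have hbdd : BddBelow X := ⟨0, fun t ht => ht.1.le⟩
  set u := sInf X with hu
  have hu0 : 0 ≤ u := le_csInf ⟨t₀, hne⟩ (fun t ht => ht.1.le)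
  have hut : u ≤ t₀ := csInf_le hbdd hne
  have hgt : ∀ s, u < s → s ≤ t₀ → Q s := by
    intro s hus hst
    obtain ⟨t, htX, hts⟩ := exists_lt_of_csInf_lt ⟨t₀, hne⟩ hus
    exact htX.2.2 s hts.le hst
  -- main claim: every t with 0 < t ≤ t₀ satisfies Q
  intro t ht ht'
  rcases lt_or_ge u t with h|h
  · exact hgt t h ht'
  -- t ≤ u : we derive a contradiction with sInf unless, using openness
  · have hPu : Q u := hlim u (lt_of_lt_of_le ht h) hut hgt
    have huX : u ∈ X := by
      refine ⟨lt_of_lt_of_le ht h, hut, fun s hsu hst => ?_⟩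
      rcases eq_or_lt_of_le hsu with h'|h'
      · exact hmono u s (le_of_eq h') hst (lt_of_lt_of_le ht h) hPu
      · exact hgt s h' hst
    obtain ⟨ε, hε, hstep⟩ := hopen u (lt_of_lt_of_le ht h) hut hPu
    have hmem : max (u - ε) (u/2) ∈ X := by
      have hu0' : 0 < u := lt_of_lt_of_le ht h
      refine ⟨lt_max_of_lt_right (by linarith), le_trans (max_le (by linarith) (by linarith)) (le_refl _), fun s hs hst => ?_⟩
      rcases le_or_gt s u with h'|h'
      · exact hstep s (le_trans (le_max_left _ _) hs) (lt_of_lt_of_le (lt_max_of_lt_right (by linarith)) hs) h'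
      · exact hgt s h' hst
    have hle : u ≤ max (u - ε) (u/2) := csInf_le hbdd hmem
    have hu0' : 0 < u := lt_of_lt_of_le ht h
    rcases max_cases (u - ε) (u/2) with ⟨h1,_⟩|⟨h1,_⟩ <;> rw [h1] at hle <;> linarith

/-- transfer of Cauchy sequences through a distance-preserving correspondence -/
lemma cauchySeq_of_dist_eq {E F : Type*} [PseudoMetricSpace E] [PseudoMetricSpace F]
    {f : ℕ → E} {g : ℕ → F} (h : ∀ m n, dist (g m) (g n) = dist (f m) (f n))
    (hf : CauchySeq f) : CauchySeq g := by
  rw [Metric.cauchySeq_iff] at hf ⊢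
  intro ε hε
  obtain ⟨N, hN⟩ := hf ε hε
  exact ⟨N, fun m hm n hn => by rw [h]; exact hN m hm n hn⟩

lemma isUnit_smul_of_ne_zero {E : Type*} [Ring E] [Algebra ℂ E] {c : ℂ} (hc : c ≠ 0)
    {x : E} (hx : IsUnit x) : IsUnit (c • x) := by
  obtain ⟨u, rfl⟩ := hx
  refine isUnit_iff_exists.2 ⟨c⁻¹ • (↑u⁻¹ : E), ?_, ?_⟩
  · rw [smul_mul_smul_comm, mul_inv_cancel₀ hc, Units.mul_inv, one_smul]
  · rw [smul_mul_smul_comm, inv_mul_cancel₀ hc, Units.inv_mul, one_smul]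

lemma isUnit_one_sub_comm {E : Type*} [Ring E] {a b : E} (h : IsUnit (1 - a * b)) :
    IsUnit (1 - b * a) := by
  obtain ⟨u, hu⟩ := h
  have h1 : (↑u⁻¹ : E) * (1 - a * b) = 1 := by rw [← hu, Units.inv_mul]
  have h2 : (1 - a * b) * (↑u⁻¹ : E) = 1 := by rw [← hu, Units.mul_inv]
  set i := (↑u⁻¹ : E)
  refine isUnit_iff_exists.2 ⟨1 + b * i * a, ?_, ?_⟩
  · have : (1 - b * a) * (1 + b * i * a) = 1 - b * a + b * ((1 - a*b) * i) * a := by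
      noncomm_ring
    rw [this, h2]; noncomm_ring
  · have : (1 + b * i * a) * (1 - b * a) = 1 - b * a + b * (i * (1 - a*b)) * a := by
      noncomm_ring
    rw [this, h1]; noncomm_ring

-- ===== part 2 =====
open Filter Metric
set_option linter.unusedSectionVars false

section Subgroup

variable {C : Type*} [NormedRing C] [NormedAlgebra ℂ C] [CompleteSpace C]
variable {𝔖 : Set C}

/-- Path lemma: a continuous path of units starting in `𝔖` stays in `𝔖`. -/
lemma mem_of_unit_path (hunit : ∀ a ∈ 𝔖, IsUnit a) (h𝔖mul : ∀ a ∈ 𝔖, ∀ b ∈ 𝔖, a * b ∈ 𝔖)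
    (hopen : IsOpen 𝔖) (hone : (1:C) ∈ 𝔖)
    (γ : ℝ → C) (hγ : Continuous γ) (hγu : ∀ t, 0 ≤ t → t ≤ 1 → IsUnit (γ t))
    (h0 : γ 0 ∈ 𝔖) : γ 1 ∈ 𝔖 := by
  obtain ⟨ε₁, hε₁, hball1⟩ := Metric.isOpen_iff.1 hopen 1 hone
  have key : ∀ t, 0 ≤ t → t ≤ 1 → γ t ∈ 𝔖 := by
    refine real_induction_up h0 ?_ ?_
    · -- openness
      intro t ht ht1 hPt
      obtain ⟨ε, hε, hball⟩ := Metric.isOpen_iff.1 hopen (γ t) hPt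
      obtain ⟨δ, hδ, hδ'⟩ := Metric.continuous_iff.1 hγ t ε hε
      exact ⟨δ/2, by linarith, fun s hs hs' _ => hball (hδ' s (by
        rw [Real.dist_eq, abs_lt]; constructor <;> linarith))⟩
    · -- closedness from the left
      intro t ht ht1 hall
      obtain ⟨u, huu⟩ := hγu t ht.le ht1
      have hinv : ContinuousAt (fun s => Ring.inverse (γ s)) t := by
        have h := NormedRing.inverse_continuousAt u
        rw [huu] at h
        exact h.comp hγ.continuousAt
      set Cb := ‖Ring.inverse (γ t)‖ + 1 with hCb
      have hCb0 : 0 < Cb := by positivity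
      have h1 : ∀ᶠ s in nhds t, ‖Ring.inverse (γ s)‖ < Cb := by
        exact hinv.norm.eventually_lt continuousAt_const (by simp [hCb])
      have h2 : ∀ᶠ s in nhds t, ‖γ t - γ s‖ * Cb < ε₁ := by
        have hc : ContinuousAt (fun s => ‖γ t - γ s‖ * Cb) t :=
          ((continuousAt_const.sub hγ.continuousAt).norm.mul continuousAt_const)
        apply hc.eventually_lt continuousAt_const
        simp [hε₁]
      have h0' : ∀ᶠ s in nhds t, 0 < s := eventually_nhds_iff.2
        ⟨Set.Ioi 0, fun x hx => hx, isOpen_Ioi, ht⟩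
      have h3 : ∀ᶠ s in nhdsWithin t (Set.Iio t),
          (‖Ring.inverse (γ s)‖ < Cb ∧ ‖γ t - γ s‖ * Cb < ε₁) ∧ 0 < s :=
        eventually_nhdsWithin_of_eventually_nhds ((h1.and h2).and h0')
      have hne : (nhdsWithin t (Set.Iio t)).NeBot := nhdsLT_neBot t
      obtain ⟨s, ⟨⟨hsc, hsd⟩, hs0⟩, hslt⟩ := (h3.and (eventually_mem_nhdsWithin)).exists
      have hsmem : γ s ∈ 𝔖 := hall s hs0.le hslt
      have hsu : IsUnit (γ s) := hunit _ hsmem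
      set i := Ring.inverse (γ s) with hi
      set w := (γ t - γ s) * i with hw
      have hwn : ‖w‖ < ε₁ := by
        calc ‖w‖ ≤ ‖γ t - γ s‖ * ‖i‖ := norm_mul_le _ _
        _ ≤ ‖γ t - γ s‖ * Cb := by
            exact mul_le_mul_of_nonneg_left hsc.le (norm_nonneg _)
        _ < ε₁ := hsd
      have h1w : (1 + w) ∈ 𝔖 := by
        apply hball1
        rw [Metric.mem_ball, dist_eq_norm]
        simpa using hwn
      have := h𝔖mul _ h1w _ hsmem
      have heq : (1 + w) * γ s = γ t := by
        rw [hw, add_mul, one_mul, mul_assoc, Ring.inverse_mul_cancel _ hsu, mul_one]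
        abel
      rwa [heq] at this
  exact key 1 zero_le_one le_rfl

/-- nonzero scalar multiples of `1` lie in `𝔖`. -/
lemma scalar_mem (hunit : ∀ a ∈ 𝔖, IsUnit a) (h𝔖mul : ∀ a ∈ 𝔖, ∀ b ∈ 𝔖, a * b ∈ 𝔖)
    (hopen : IsOpen 𝔖) (hone : (1:C) ∈ 𝔖) {c : ℂ} (hc : c ≠ 0) : c • (1:C) ∈ 𝔖 := by
  set w := Complex.log c with hwdef
  have hγ : Continuous (fun t : ℝ => Complex.exp ((t:ℂ) * w) • (1:C)) := by
    exact ((Complex.continuous_exp.comp (by continuity)).smul continuous_const)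
  have hγu : ∀ t:ℝ, 0 ≤ t → t ≤ 1 → IsUnit (Complex.exp ((t:ℂ) * w) • (1:C)) := by
    intro t _ _
    exact isUnit_smul_of_ne_zero (Complex.exp_ne_zero _) isUnit_one
  have := mem_of_unit_path hunit h𝔖mul hopen hone _ hγ hγu (by simpa using hone)
  simpa [hwdef, Complex.exp_log hc] using this

lemma smul_mem' (hunit : ∀ a ∈ 𝔖, IsUnit a) (h𝔖mul : ∀ a ∈ 𝔖, ∀ b ∈ 𝔖, a * b ∈ 𝔖)
    (hopen : IsOpen 𝔖) (hone : (1:C) ∈ 𝔖) {c : ℂ} (hc : c ≠ 0) {b : C} (hb : b ∈ 𝔖) :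
    c • b ∈ 𝔖 := by
  have := h𝔖mul _ (scalar_mem hunit h𝔖mul hopen hone hc) _ hb
  rwa [smul_mul_assoc, one_mul] at this

/-- elements close to 1: `1 - v ∈ 𝔖` when `‖v‖ < 1`. -/
lemma one_sub_mem (hunit : ∀ a ∈ 𝔖, IsUnit a) (h𝔖mul : ∀ a ∈ 𝔖, ∀ b ∈ 𝔖, a * b ∈ 𝔖)
    (hopen : IsOpen 𝔖) (hone : (1:C) ∈ 𝔖) {v : C} (hv : ‖v‖ < 1) : 1 - v ∈ 𝔖 := by
  have hγ : Continuous (fun t : ℝ => 1 - t • v) := by continuity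
  have hγu : ∀ t:ℝ, 0 ≤ t → t ≤ 1 → IsUnit ((1:C) - t • v) := by
    intro t ht ht1
    have : ‖t • v‖ < 1 := by
      rw [norm_smul, Real.norm_eq_abs, abs_of_nonneg ht]
      calc t * ‖v‖ ≤ 1 * ‖v‖ := by
            exact mul_le_mul_of_nonneg_right ht1 (norm_nonneg _)
      _ < 1 := by simpa using hv
    exact (Units.oneSub _ this).isUnit
  have := mem_of_unit_path hunit h𝔖mul hopen hone _ hγ hγu (by simpa using hone)
  simpa using this

/-- every point of a ball of units around a point of `𝔖` lies in `𝔖`. -/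
lemma ball_subset_mem (hunit : ∀ a ∈ 𝔖, IsUnit a) (h𝔖mul : ∀ a ∈ 𝔖, ∀ b ∈ 𝔖, a * b ∈ 𝔖)
    (hopen : IsOpen 𝔖) (hone : (1:C) ∈ 𝔖) {a x : C} (ha : a ∈ 𝔖)
    (hx : ‖x - a‖ * ‖Ring.inverse a‖ < 1) : x ∈ 𝔖 := by
  have hau : IsUnit a := hunit _ ha
  set i := Ring.inverse a with hi
  have h1 : (1 + (x - a) * i) ∈ 𝔖 := by
    have : (1:C) - (-((x-a)*i)) ∈ 𝔖 := by
      apply one_sub_mem hunit h𝔖mul hopen hone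
      rw [norm_neg]
      calc ‖(x-a)*i‖ ≤ ‖x-a‖*‖i‖ := norm_mul_le _ _
      _ < 1 := hx
    simpa using this
  have := h𝔖mul _ h1 _ ha
  have heq : (1 + (x - a) * i) * a = x := by
    rw [add_mul, one_mul, mul_assoc, Ring.inverse_mul_cancel _ hau, mul_one]
    abel
  rwa [heq] at this

/-- a quantitative open-ness radius at each point of `𝔖`. -/
lemma exists_ball_subset (hunit : ∀ a ∈ 𝔖, IsUnit a) (h𝔖mul : ∀ a ∈ 𝔖, ∀ b ∈ 𝔖, a * b ∈ 𝔖)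
    (hopen : IsOpen 𝔖) (hone : (1:C) ∈ 𝔖) {a : C} (ha : a ∈ 𝔖) :
    ∃ r > 0, Metric.ball a r ⊆ 𝔖 := by
  refine ⟨(‖Ring.inverse a‖ + 1)⁻¹, by positivity, fun x hx => ?_⟩
  rw [Metric.mem_ball, dist_eq_norm] at hx
  apply ball_subset_mem hunit h𝔖mul hopen hone ha
  have h0 : (0:ℝ) < ‖Ring.inverse a‖ + 1 := by positivity
  calc ‖x - a‖ * ‖Ring.inverse a‖ ≤ ‖x - a‖ * (‖Ring.inverse a‖ + 1) := by
        apply mul_le_mul_of_nonneg_left (by linarith) (norm_nonneg _)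
  _ < (‖Ring.inverse a‖ + 1)⁻¹ * (‖Ring.inverse a‖ + 1) := by
        apply mul_lt_mul_of_pos_right hx h0
  _ = 1 := inv_mul_cancel₀ (by positivity)

end Subgroup

-- ===== part 3 =====
open Filter Metric
set_option linter.unusedSectionVars false

section Main

variable {A B : Type*} [NormedRing A] [NormedAlgebra ℂ A] [CompleteSpace A]
    [NormedRing B] [NormedAlgebra ℂ B] [CompleteSpace B]
    {𝔄 : Set A} {𝔅 : Set B} {T : A → B} {S : B → A}

/-- the inverse map exists -/
lemma exists_inverse_map (hmaps : Set.MapsTo T 𝔄 𝔅) (hsurj : Set.SurjOn T 𝔄 𝔅)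
    (hiso : ∀ a ∈ 𝔄, ∀ b ∈ 𝔄, ‖T a - T b‖ = ‖a - b‖) :
    ∃ S : B → A, (∀ b ∈ 𝔅, S b ∈ 𝔄) ∧ (∀ b ∈ 𝔅, T (S b) = b) ∧ (∀ a ∈ 𝔄, S (T a) = a) := by
  classical
  refine ⟨fun b => if h : b ∈ 𝔅 then (hsurj h).choose else 1, fun b hb => ?_, fun b hb => ?_, fun a ha => ?_⟩
  · simp only [dif_pos hb]
    exact (hsurj hb).choose_spec.1
  · simp only [dif_pos hb]
    exact (hsurj hb).choose_spec.2
  · have hTa : T a ∈ 𝔅 := hmaps ha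
    simp only [dif_pos hTa]
    have h1 := (hsurj hTa).choose_spec.1
    have h2 := (hsurj hTa).choose_spec.2
    have := hiso _ h1 _ ha
    rw [h2] at this
    simp only [sub_self, norm_zero] at this
    have := (norm_eq_zero.1 this.symm)
    have := sub_eq_zero.1 this
    exact this

/-- isometry of the inverse map -/
lemma S_isometry (hiso : ∀ a ∈ 𝔄, ∀ b ∈ 𝔄, ‖T a - T b‖ = ‖a - b‖)
    (hS1 : ∀ b ∈ 𝔅, S b ∈ 𝔄) (hS2 : ∀ b ∈ 𝔅, T (S b) = b) :
    ∀ b ∈ 𝔅, ∀ b' ∈ 𝔅, ‖S b - S b'‖ = ‖b - b'‖ := by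
  intro b hb b' hb'
  have := hiso _ (hS1 _ hb) _ (hS1 _ hb')
  rw [hS2 _ hb, hS2 _ hb'] at this
  exact this.symm

/-- KEY: `T` transfers balls inside `𝔄` to balls inside `𝔅`. -/
lemma ball_transfer (hmaps : Set.MapsTo T 𝔄 𝔅) (h𝔅open : IsOpen 𝔅)
    (hiso : ∀ a ∈ 𝔄, ∀ b ∈ 𝔄, ‖T a - T b‖ = ‖a - b‖)
    (hS1 : ∀ b ∈ 𝔅, S b ∈ 𝔄) (hS2 : ∀ b ∈ 𝔅, T (S b) = b)
    (hS3 : ∀ a ∈ 𝔄, S (T a) = a)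
    {a : A} {r : ℝ} (hball : Metric.ball a r ⊆ 𝔄) :
    Metric.ball (T a) r ⊆ 𝔅 := by
  intro c hc
  rw [Metric.mem_ball, dist_eq_norm] at hc
  have hr : 0 < r := lt_of_le_of_lt (norm_nonneg _) hc
  have ha : a ∈ 𝔄 := hball (Metric.mem_ball_self hr)
  have hSiso := S_isometry (𝔅 := 𝔅) hiso hS1 hS2
  set γ : ℝ → B := fun s => T a + s • (c - T a) with hγdef
  have hγc : Continuous γ := by
    apply continuous_const.add (continuous_id.smul continuous_const)
  have hγd : ∀ s s' : ℝ, ‖γ s - γ s'‖ = |s - s'| * ‖c - T a‖ := by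
    intro s s'
    have : γ s - γ s' = (s - s') • (c - T a) := by
      simp only [hγdef]
      rw [sub_smul]
      abel
    rw [this, norm_smul, Real.norm_eq_abs]
  have hγa : ∀ s : ℝ, ‖γ s - T a‖ = |s| * ‖c - T a‖ := by
    intro s
    have := hγd s 0
    simpa [hγdef] using this
  have key : ∀ t, 0 ≤ t → t ≤ 1 → γ t ∈ 𝔅 := by
    refine real_induction_up ?_ ?_ ?_
    · simpa [hγdef] using hmaps ha
    · intro t ht ht1 hPt
      obtain ⟨ε, hε, hball'⟩ := Metric.isOpen_iff.1 h𝔅open (γ t) hPt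
      refine ⟨ε / (2*(‖c - T a‖ + 1)), by positivity, fun s hs hs' _ => hball' ?_⟩
      rw [Metric.mem_ball, dist_eq_norm, hγd]
      have h1 : |s - t| ≤ ε / (2*(‖c - T a‖ + 1)) := by
        rw [abs_le]; constructor <;> linarith
      have h2 : (0:ℝ) < ‖c - T a‖ + 1 := by positivity
      calc |s - t| * ‖c - T a‖ ≤ (ε / (2*(‖c - T a‖ + 1))) * (‖c - T a‖ + 1) := by
            apply mul_le_mul h1 (by linarith) (norm_nonneg _) (by positivity)
      _ = ε/2 := by field_simp
      _ < ε := by linarith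
    · intro t ht ht1 hall
      set sq : ℕ → ℝ := fun n => t - t / (n + 1) with hsq
      have hsq0 : ∀ n, 0 ≤ sq n := by
        intro n
        have h1 : t / (n+1) ≤ t / 1 := by
          apply div_le_div_of_nonneg_left ht.le zero_lt_one (by exact_mod_cast Nat.succ_le_succ (Nat.zero_le n))
        simp only [hsq]
        simp only [div_one] at h1
        linarith
      have hsqlt : ∀ n, sq n < t := by
        intro n
        simp only [hsq]
        have : 0 < t / (n+1) := by positivity
        linarith
      have hsqt : Tendsto sq atTop (nhds t) := by
        have h1 : Tendsto (fun n : ℕ => t / ((n:ℝ) + 1)) atTop (nhds 0) := by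
          have := (tendsto_const_div_atTop_nhds_zero_nat t).comp (tendsto_add_atTop_nat 1)
          have heq : ((fun n:ℕ => t / (n:ℝ)) ∘ fun n:ℕ => n + 1) = fun n:ℕ => t / ((n:ℝ)+1) := by
            funext n
            simp only [Function.comp]
            push_cast
            ring_nf
          rwa [heq] at this
        have := h1.const_sub t
        simpa [hsq] using this
      have hγs : Tendsto (fun n => γ (sq n)) atTop (nhds (γ t)) :=
        (hγc.tendsto t).comp hsqt
      have hmem : ∀ n, γ (sq n) ∈ 𝔅 := fun n => hall _ (hsq0 n) (hsqlt n)
      set aseq : ℕ → A := fun n => S (γ (sq n)) with haseq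
      have hcs : CauchySeq aseq := by
        apply cauchySeq_of_dist_eq (f := fun n => γ (sq n))
        · intro m n
          rw [dist_eq_norm, dist_eq_norm]
          exact hSiso _ (hmem m) _ (hmem n)
        · exact hγs.cauchySeq
      obtain ⟨x, hx⟩ := cauchySeq_tendsto_of_complete hcs
      have haseqA : ∀ n, aseq n ∈ 𝔄 := fun n => hS1 _ (hmem n)
      have hxa : ‖x - a‖ < r := by
        have hn : Tendsto (fun n => ‖aseq n - a‖) atTop (nhds ‖x - a‖) :=
          (hx.sub tendsto_const_nhds).norm
        have hb : ∀ n, ‖aseq n - a‖ ≤ t * ‖c - T a‖ := by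
          intro n
          have h1 : ‖aseq n - a‖ = ‖γ (sq n) - T a‖ := by
            have h2 := hSiso _ (hmem n) _ (hmaps ha)
            rw [hS3 _ ha] at h2
            exact h2
          rw [h1, hγa]
          have : |sq n| = sq n := abs_of_nonneg (hsq0 n)
          rw [this]
          apply mul_le_mul_of_nonneg_right (le_of_lt (hsqlt n)) (norm_nonneg _)
        have := le_of_tendsto hn (Filter.Eventually.of_forall hb)
        have ht1' : t * ‖c - T a‖ ≤ ‖c - T a‖ := by
          nlinarith [norm_nonneg (c - T a)]
        linarith
      have hxA : x ∈ 𝔄 := hball (by rwa [Metric.mem_ball, dist_eq_norm])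
      have hTx : Tendsto (fun n => T (aseq n)) atTop (nhds (T x)) := by
        rw [tendsto_iff_dist_tendsto_zero]
        have heq : ∀ n, dist (T (aseq n)) (T x) = dist (aseq n) x := by
          intro n
          rw [dist_eq_norm, dist_eq_norm]
          exact hiso _ (haseqA n) _ hxA
        simp only [heq]
        exact tendsto_iff_dist_tendsto_zero.1 hx
      have hTaseq : ∀ n, T (aseq n) = γ (sq n) := fun n => hS2 _ (hmem n)
      have : γ t = T x := by
        apply tendsto_nhds_unique (f := fun n => γ (sq n)) hγs
        simpa only [hTaseq] using hTx
      rw [this]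
      exact hmaps hxA
  have := key 1 zero_le_one le_rfl
  simpa [hγdef] using this

end Main

-- ===== part 4 =====
open Filter Metric
set_option linter.unusedSectionVars false

section Main

variable {A B : Type*} [NormedRing A] [NormedAlgebra ℂ A] [CompleteSpace A]
    [NormedRing B] [NormedAlgebra ℂ B] [CompleteSpace B]
    {𝔄 : Set A} {𝔅 : Set B} {T : A → B}

lemma zero_mem_closure (h𝔄unit : ∀ a ∈ 𝔄, IsUnit a) (h𝔄one : (1 : A) ∈ 𝔄)
    (h𝔄mul : ∀ a ∈ 𝔄, ∀ b ∈ 𝔄, a * b ∈ 𝔄) (h𝔄open : IsOpen 𝔄) :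
    (0:A) ∈ closure 𝔄 := by
  have h0 : Tendsto (fun n : ℕ => (((n:ℝ)+1)⁻¹ : ℝ)) atTop (nhds 0) := by
    have := tendsto_const_div_atTop_nhds_zero_nat (1:ℝ)
    have h2 := this.comp (tendsto_add_atTop_nat 1)
    have heq : ((fun n:ℕ => (1:ℝ) / (n:ℝ)) ∘ fun n:ℕ => n + 1) = fun n:ℕ => (((n:ℝ)+1)⁻¹ : ℝ) := by
      funext n
      simp only [Function.comp]
      push_cast
      rw [one_div]
    rwa [heq] at h2
  have hseq : Tendsto (fun n : ℕ => ((((n:ℝ)+1)⁻¹ : ℝ) : ℂ) • (1:A)) atTop (nhds 0) := by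
    apply squeeze_zero_norm (a := fun n : ℕ => (((n:ℝ)+1)⁻¹ : ℝ) * ‖(1:A)‖)
    · intro n
      rw [norm_smul, Complex.norm_real, Real.norm_eq_abs,
        abs_of_nonneg (by positivity : (0:ℝ) ≤ ((n:ℝ)+1)⁻¹)]
    · simpa using h0.mul_const ‖(1:A)‖
  apply mem_closure_of_tendsto hseq
  apply Filter.Eventually.of_forall
  intro n
  apply scalar_mem h𝔄unit h𝔄mul h𝔄open h𝔄one
  have h1 : (((n:ℝ)+1)⁻¹ : ℝ) ≠ 0 := by positivity
  exact_mod_cast h1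

lemma exists_limit (h𝔄unit : ∀ a ∈ 𝔄, IsUnit a) (h𝔄one : (1 : A) ∈ 𝔄)
    (h𝔄mul : ∀ a ∈ 𝔄, ∀ b ∈ 𝔄, a * b ∈ 𝔄) (h𝔄open : IsOpen 𝔄)
    (hiso : ∀ a ∈ 𝔄, ∀ b ∈ 𝔄, ‖T a - T b‖ = ‖a - b‖) :
    ∃ u₀ : B, Tendsto T (nhdsWithin 0 𝔄) (nhds u₀) := by
  have hne : (nhdsWithin (0:A) 𝔄).NeBot :=
    mem_closure_iff_nhdsWithin_neBot.1 (zero_mem_closure h𝔄unit h𝔄one h𝔄mul h𝔄open)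
  have hC : Cauchy (Filter.map T (nhdsWithin 0 𝔄)) := by
    rw [Metric.cauchy_iff]
    constructor
    · exact Filter.NeBot.map hne T
    · intro ε hε
      refine ⟨T '' (𝔄 ∩ Metric.ball 0 (ε/4)), ?_, ?_⟩
      · rw [Filter.mem_map]
        apply Filter.mem_of_superset
          (inter_mem self_mem_nhdsWithin (mem_nhdsWithin_of_mem_nhds (Metric.ball_mem_nhds (0:A) (show (0:ℝ) < ε/4 by linarith))))
        intro a ha
        exact Set.mem_preimage.2 (Set.mem_image_of_mem T ⟨ha.1, ha.2⟩)
      · rintro _ ⟨a, ⟨haA, hab⟩, rfl⟩ _ ⟨a', ⟨haA', hab'⟩, rfl⟩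
        rw [dist_eq_norm, hiso _ haA _ haA']
        rw [Metric.mem_ball, dist_eq_norm, sub_zero] at hab hab'
        calc ‖a - a'‖ ≤ ‖a‖ + ‖a'‖ := norm_sub_le _ _
        _ < ε/4 + ε/4 := by exact add_lt_add hab hab'
        _ < ε := by linarith
  obtain ⟨u₀, hu₀⟩ := CompleteSpace.complete hC
  exact ⟨u₀, hu₀⟩

end Main

-- ===== part 5 =====
open Filter Metric
set_option linter.unusedSectionVars false
set_option maxHeartbeats 1000000

section Main

variable {A B : Type*} [NormedRing A] [NormedAlgebra ℂ A] [CompleteSpace A]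
    [NormedRing B] [NormedAlgebra ℂ B] [CompleteSpace B]
    {𝔄 : Set A} {𝔅 : Set B} {T : A → B} {S : B → A}

/-- The local Mazur–Ulam-type midpoint lemma, via reflections. -/
lemma midpoint_key (hmaps : Set.MapsTo T 𝔄 𝔅) (h𝔅open : IsOpen 𝔅)
    (hiso : ∀ a ∈ 𝔄, ∀ b ∈ 𝔄, ‖T a - T b‖ = ‖a - b‖)
    (hS1 : ∀ b ∈ 𝔅, S b ∈ 𝔄) (hS2 : ∀ b ∈ 𝔅, T (S b) = b)
    (hS3 : ∀ a ∈ 𝔄, S (T a) = a)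
    {z x : A} (hball : Metric.ball z (100 * ‖x - z‖) ⊆ 𝔄) (hxz : x ≠ z) :
    T x + T (z + z - x) = T z + T z := by
  set δ := ‖x - z‖ with hδdef
  have hδ : 0 < δ := by
    rw [hδdef, norm_pos_iff, sub_ne_zero]; exact hxz
  set y := z + z - x with hydef
  have hyz : ‖y - z‖ = δ := by
    rw [hydef, hδdef, show z + z - x - z = z - x by abel, norm_sub_rev]
  -- memberships
  have hzA : z ∈ 𝔄 := hball (by simp [Metric.mem_ball]; positivity)
  have hxA : x ∈ 𝔄 := hball (by rw [Metric.mem_ball, dist_eq_norm, ← hδdef]; nlinarith)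
  have hyA : y ∈ 𝔄 := hball (by rw [Metric.mem_ball, dist_eq_norm, hyz]; nlinarith)
  have hballB : Metric.ball (T z) (100 * δ) ⊆ 𝔅 :=
    ball_transfer hmaps h𝔅open hiso hS1 hS2 hS3 hball
  have hmemA : ∀ w : A, ‖w - z‖ < 100*δ → w ∈ 𝔄 := by
    intro w hw
    exact hball (by rwa [Metric.mem_ball, dist_eq_norm])
  have hmemB : ∀ w : B, ‖w - T z‖ < 100*δ → w ∈ 𝔅 := by
    intro w hw
    exact hballB (by rwa [Metric.mem_ball, dist_eq_norm])
  -- the defect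
  set e2 := ‖T x + T y - (T z + T z)‖ with he2def
  rcases eq_or_lt_of_le (norm_nonneg (T x + T y - (T z + T z))) with he0|he2pos
  · -- defect zero: done
    have := (norm_eq_zero.1 (he0.symm))
    have := sub_eq_zero.1 this
    exact this
  exfalso
  have hTxz : ‖T x - T z‖ = δ := by rw [hiso _ hxA _ hzA, ← hδdef]
  have hTyz : ‖T y - T z‖ = δ := by rw [hiso _ hyA _ hzA, hyz]
  have he2le : e2 ≤ 2*δ := by
    rw [he2def, show T x + T y - (T z + T z) = (T x - T z) + (T y - T z) by abel]
    calc ‖(T x - T z) + (T y - T z)‖ ≤ ‖T x - T z‖ + ‖T y - T z‖ := norm_add_le _ _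
    _ = 2*δ := by rw [hTxz, hTyz]; ring
  -- reflections
  set p : A → A := fun w => z + z - w with hpdef
  set q : B → B := fun w => T x + T y - w with hqdef
  have hpz : ∀ w : A, ‖p w - z‖ = ‖w - z‖ := by
    intro w; rw [hpdef, show z + z - w - z = z - w by abel, norm_sub_rev]
  have hpiso : ∀ w w' : A, ‖p w - p w'‖ = ‖w - w'‖ := by
    intro w w'; rw [hpdef, show z + z - w - (z + z - w') = w' - w by abel, norm_sub_rev]
  have hpp : ∀ w : A, p (p w) = w := by
    intro w; show z + z - (z + z - w) = w; exact sub_sub_cancel _ _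
  have hpx : p x = y := by rw [hpdef, hydef]
  have hpy : p y = x := by
    show z + z - (z + z - x) = x; exact sub_sub_cancel _ _
  have hpzz : p z = z := by
    show z + z - z = z; exact add_sub_cancel_right z z
  have hqq : ∀ w : B, q (q w) = w := by
    intro w; show T x + T y - (T x + T y - w) = w; exact sub_sub_cancel _ _
  have hqTx : q (T x) = T y := by
    show T x + T y - T x = T y; exact add_sub_cancel_left _ _
  have hqTy : q (T y) = T x := by
    show T x + T y - T y = T x; exact add_sub_cancel_right _ _
  have hqiso : ∀ w w' : B, ‖q w - q w'‖ = ‖w - w'‖ := by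
    intro w w'; rw [hqdef, show T x + T y - w - (T x + T y - w') = w' - w by abel, norm_sub_rev]
  have hqz : ∀ w : B, ‖q w - T z‖ ≤ e2 + ‖w - T z‖ := by
    intro w
    rw [hqdef, show T x + T y - w - T z = (T x + T y - (T z + T z)) + (T z - w) by abel]
    calc ‖(T x + T y - (T z + T z)) + (T z - w)‖ ≤ ‖T x + T y - (T z + T z)‖ + ‖T z - w‖ :=
          norm_add_le _ _
    _ = e2 + ‖w - T z‖ := by rw [← he2def, norm_sub_rev]
  have hqzd : ‖q (T z) - T z‖ = e2 := by
    rw [hqdef, he2def, show T x + T y - T z - T z = T x + T y - (T z + T z) by abel]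
  -- base maps
  set m : A → A := fun w => p (S (q (T w))) with hmdef
  set mi : A → A := fun w => S (q (T (p w))) with hmidef
  -- the invariant
  set Nice : (A → A) → (A → A) → ℝ → ℝ → Prop := fun g h c r =>
    0 ≤ c ∧ c ≤ 8*δ ∧ 20*δ ≤ r ∧ r ≤ 80*δ ∧
    (∀ w, ‖w - z‖ < r → ‖g w - z‖ ≤ ‖w - z‖ + c ∧ ‖h w - z‖ ≤ ‖w - z‖ + c) ∧
    (∀ w w', ‖w - z‖ < r → ‖w' - z‖ < r → ‖g w - g w'‖ = ‖w - w'‖ ∧ ‖h w - h w'‖ = ‖w - w'‖) ∧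
    (∀ w, ‖w - z‖ < r → h (g w) = w ∧ g (h w) = w) ∧
    g x = x ∧ g y = y ∧ h x = x ∧ h y = y ∧ ‖g z - z‖ = c ∧ ‖h z - z‖ = c
    with hNdef
  -- facts about T∘-chains on balls
  have hTz : ∀ w : A, w ∈ 𝔄 → ‖T w - T z‖ = ‖w - z‖ := fun w hw => hiso _ hw _ hzA
  have hSz : ∀ w : B, w ∈ 𝔅 → ‖S w - z‖ = ‖w - T z‖ := by
    intro w hw
    have := S_isometry (𝔅 := 𝔅) hiso hS1 hS2 _ hw _ (hmaps hzA)
    rwa [hS3 _ hzA] at this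
  have hSiso := S_isometry (𝔅 := 𝔅) hiso hS1 hS2
  -- base case
  have base : Nice m mi e2 (80*δ) := by
    rw [hNdef]
    have hWA : ∀ w : A, ‖w - z‖ < 80*δ → w ∈ 𝔄 := fun w hw => hmemA w (by nlinarith)
    have hTWB : ∀ w : A, ‖w - z‖ < 80*δ → T w ∈ 𝔅 := by
      intro w hw
      apply hmemB
      rw [hTz _ (hWA _ hw)]; nlinarith
    have hqTWB : ∀ w : A, ‖w - z‖ < 80*δ → q (T w) ∈ 𝔅 := by
      intro w hw
      apply hmemB
      calc ‖q (T w) - T z‖ ≤ e2 + ‖T w - T z‖ := hqz _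
      _ = e2 + ‖w - z‖ := by rw [hTz _ (hWA _ hw)]
      _ < 2*δ + 80*δ := by exact add_lt_add_of_le_of_lt he2le hw
      _ < 100*δ := by nlinarith
    have hmn : ∀ w : A, ‖w - z‖ < 80*δ → ‖m w - z‖ ≤ ‖w - z‖ + e2 := by
      intro w hw
      rw [hmdef]
      simp only
      rw [hpz, hSz _ (hqTWB _ hw)]
      calc ‖q (T w) - T z‖ ≤ e2 + ‖T w - T z‖ := hqz _
      _ = ‖w - z‖ + e2 := by rw [hTz _ (hWA _ hw)]; ring
    have hmin : ∀ w : A, ‖w - z‖ < 80*δ → ‖mi w - z‖ ≤ ‖w - z‖ + e2 := by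
      intro w hw
      have hw' : ‖p w - z‖ < 80*δ := by rwa [hpz]
      rw [hmidef]
      simp only
      rw [hSz _ (hqTWB _ hw')]
      calc ‖q (T (p w)) - T z‖ ≤ e2 + ‖T (p w) - T z‖ := hqz _
      _ = e2 + ‖p w - z‖ := by rw [hTz _ (hWA _ hw')]
      _ = ‖w - z‖ + e2 := by rw [hpz]; ring
    refine ⟨norm_nonneg _, by nlinarith, by nlinarith, le_refl _, ?_, ?_, ?_, ?_, ?_, ?_, ?_, ?_, ?_⟩
    · exact fun w hw => ⟨hmn w hw, hmin w hw⟩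
    · -- isometry
      intro w w' hw hw'
      constructor
      · rw [hmdef]; simp only
        rw [hpiso, hSiso _ (hqTWB _ hw) _ (hqTWB _ hw'), hqiso, hiso _ (hWA _ hw) _ (hWA _ hw')]
      · rw [hmidef]; simp only
        have hw2 : ‖p w - z‖ < 80*δ := by rwa [hpz]
        have hw2' : ‖p w' - z‖ < 80*δ := by rwa [hpz]
        rw [hSiso _ (hqTWB _ hw2) _ (hqTWB _ hw2'), hqiso, hiso _ (hWA _ hw2) _ (hWA _ hw2'), hpiso]
    · -- inverses
      intro w hw
      constructor
      · rw [hmdef, hmidef]; simp only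
        rw [hpp, hS2 _ (hqTWB _ hw), hqq, hS3 _ (hWA _ hw)]
      · rw [hmdef, hmidef]; simp only
        have hw2 : ‖p w - z‖ < 80*δ := by rwa [hpz]
        rw [hS2 _ (hqTWB _ hw2), hqq, hS3 _ (hWA _ hw2), hpp]
    · rw [hmdef]; simp only; rw [hqTx, hS3 _ hyA, hpy]
    · rw [hmdef]; simp only; rw [hqTy, hS3 _ hxA, hpx]
    · rw [hmidef]; simp only; rw [hpx, hqTy, hS3 _ hxA]
    · rw [hmidef]; simp only; rw [hpy, hqTx, hS3 _ hyA]
    · rw [hmdef]; simp only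
      rw [show p (S (q (T z))) - z = p (S (q (T z))) - p z by rw [hpzz], hpiso,
        hSz _ (hqTWB _ (by simp; positivity)), hqzd]
    · rw [hmidef]; simp only
      rw [hpzz, hSz _ (hqTWB _ (by simp; positivity)), hqzd]
  -- step
  have step : ∀ g h c r, Nice g h c r → c ≤ 4*δ → 20*δ ≤ r - c →
      Nice (fun w => p (h (p (g w)))) (fun w => h (p (g (p w)))) (2*c) (r - c) := by
    intro g h c r hN hc4 hrc
    rw [hNdef] at hN ⊢
    obtain ⟨hc0, hc8, hr20, hr80, hexp, hisog, hinv, hgx, hgy, hhx, hhy, hgz, hhz⟩ := hN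
    have harg : ∀ w : A, ‖w - z‖ < r - c → ‖g w - z‖ < r := by
      intro w hw
      have := (hexp w (by linarith)).1
      linarith
    have hargp : ∀ w : A, ‖w - z‖ < r - c → ‖p (g w) - z‖ < r := by
      intro w hw; rw [hpz]; exact harg w hw
    refine ⟨by linarith, by linarith, hrc, by linarith, ?_, ?_, ?_, ?_, ?_, ?_, ?_, ?_, ?_⟩
    · -- expansion
      intro w hw
      constructor
      · rw [hpz]
        calc ‖h (p (g w)) - z‖ ≤ ‖p (g w) - z‖ + c := (hexp _ (hargp w hw)).2
        _ = ‖g w - z‖ + c := by rw [hpz]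
        _ ≤ ‖w - z‖ + 2*c := by
            have := (hexp w (by linarith)).1
            linarith
      · have hw2 : ‖p w - z‖ < r - c := by rwa [hpz]
        calc ‖h (p (g (p w))) - z‖ ≤ ‖p (g (p w)) - z‖ + c := (hexp _ (hargp _ hw2)).2
        _ = ‖g (p w) - z‖ + c := by rw [hpz]
        _ ≤ ‖p w - z‖ + 2*c := by
            have := (hexp (p w) (by linarith)).1
            linarith
        _ = ‖w - z‖ + 2*c := by rw [hpz]
    · -- isometry
      intro w w' hw hw'
      constructor
      · rw [hpiso, (hisog _ _ (hargp w hw) (hargp w' hw')).2, hpiso,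
          (hisog _ _ (by linarith [hw] : ‖w - z‖ < r) (by linarith [hw'] : ‖w' - z‖ < r)).1]
      · have hw2 : ‖p w - z‖ < r - c := by rwa [hpz]
        have hw2' : ‖p w' - z‖ < r - c := by rwa [hpz]
        rw [(hisog _ _ (hargp _ hw2) (hargp _ hw2')).2, hpiso,
          (hisog _ _ (by linarith [hw2] : ‖p w - z‖ < r) (by linarith [hw2'] : ‖p w' - z‖ < r)).1,
          hpiso]
    · -- inverses
      intro w hw
      constructor
      · -- h' (g' w) = w
        show h (p (g (p (p (h (p (g w))))))) = w
        rw [hpp]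
        have h1 : ‖p (g w) - z‖ < r := hargp w hw
        rw [(hinv _ h1).2, hpp, (hinv _ (by linarith [hw] : ‖w - z‖ < r)).1]
      · -- g' (h' w) = w
        show p (h (p (g (h (p (g (p w))))))) = w
        have hw2 : ‖p w - z‖ < r - c := by rwa [hpz]
        have h1 : ‖p (g (p w)) - z‖ < r := hargp _ hw2
        rw [(hinv _ h1).2, hpp, (hinv _ (by linarith [hw2] : ‖p w - z‖ < r)).1, hpp]
    · show p (h (p (g x))) = x
      rw [hgx, hpx, hhy, hpy]
    · show p (h (p (g y))) = y
      rw [hgy, hpy, hhx, hpx]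
    · show h (p (g (p x))) = x
      rw [hpx, hgy, hpy, hhx]
    · show h (p (g (p y))) = y
      rw [hpy, hgx, hpx, hhy]
    · -- defect of g'
      show ‖p (h (p (g z))) - z‖ = 2*c
      set v := g z with hvdef
      have hvz : ‖v - z‖ = c := hgz
      have h1 : ‖p v - z‖ < r := by rw [hpz, hvz]; linarith
      have h2 : ‖v - z‖ < r := by rw [hvz]; linarith
      have hzv : h v = z := by
        rw [hvdef, (hinv z (by simp; linarith)).1]
      rw [show p (h (p v)) - z = p (h (p v)) - p z by rw [hpzz], hpiso]
      rw [show (‖h (p v) - z‖ : ℝ) = ‖h (p v) - h v‖ by rw [hzv]]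
      rw [(hisog _ _ h1 h2).2]
      rw [hpdef]
      simp only
      rw [show z + z - v - v = (2:ℝ) • (z - v) by rw [two_smul]; abel]
      rw [norm_smul, Real.norm_eq_abs, norm_sub_rev, hvz]
      simp [abs_of_nonneg]
    · -- defect of h'
      show ‖h (p (g (p z))) - z‖ = 2*c
      set v := g z with hvdef
      have hvz : ‖v - z‖ = c := hgz
      have h1 : ‖p v - z‖ < r := by rw [hpz, hvz]; linarith
      have h2 : ‖v - z‖ < r := by rw [hvz]; linarith
      have hzv : h v = z := by
        rw [hvdef, (hinv z (by simp; linarith)).1]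
      rw [hpzz]
      rw [show (‖h (p v) - z‖ : ℝ) = ‖h (p v) - h v‖ by rw [hzv]]
      rw [(hisog _ _ h1 h2).2]
      rw [hpdef]
      simp only
      rw [show z + z - v - v = (2:ℝ) • (z - v) by rw [two_smul]; abel]
      rw [norm_smul, Real.norm_eq_abs, norm_sub_rev, hvz]
      simp [abs_of_nonneg]
  -- iterate
  set M : ℕ → (A → A) × (A → A) :=
    fun n => Nat.rec (m, mi)
      (fun _ pr => (fun w => p (pr.2 (p (pr.1 w))), fun w => pr.2 (p (pr.1 (p w))))) n
    with hMdef
  have hMs : ∀ n, M (n+1) = (fun w => p ((M n).2 (p ((M n).1 w))), fun w => (M n).2 (p ((M n).1 (p w)))) := by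
    intro n; rfl
  have claim : ∀ n : ℕ, 2^n * e2 ≤ 4*δ →
      Nice (M n).1 (M n).2 (2^n * e2) (80*δ - (2^n - 1) * e2) := by
    intro n
    induction n with
    | zero =>
      intro _
      simpa using (show Nice (M 0).1 (M 0).2 e2 (80 * δ) from base)
    | succ k ih =>
      intro hk
      have h2k : (2:ℝ)^k * e2 ≤ 2*δ := by
        have : (2:ℝ)^(k+1) = 2 * 2^k := by ring
        rw [this] at hk
        nlinarith [pow_pos (show (0:ℝ) < 2 by norm_num) k]
      have hNk := ih (by linarith)
      have hstep := step _ _ _ _ hNk (by linarith) (by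
        have h1 : (2:ℝ)^k ≥ 1 := one_le_pow₀ (by norm_num)
        have h2 : ((2:ℝ)^k - 1) * e2 ≤ 2^k * e2 := by nlinarith
        nlinarith)
      rw [hMs k]
      have harith1 : 2 * (2^k * e2) = 2^(k+1) * e2 := by ring
      have harith2 : 80*δ - (2^k - 1) * e2 - 2^k * e2 = 80*δ - (2^(k+1) - 1) * e2 := by ring
      rw [harith1, harith2] at hstep
      exact hstep
  -- find the contradiction index
  have hex : ∃ n : ℕ, 2*δ < 2^n * e2 := by
    obtain ⟨n, hn⟩ := pow_unbounded_of_one_lt (R := ℝ) (2*δ/e2) (by norm_num : (1:ℝ) < 2)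
    refine ⟨n, ?_⟩
    rw [div_lt_iff₀ he2pos] at hn
    linarith
  classical
  have hn := Nat.find_spec hex
  have hn0 : Nat.find hex ≠ 0 := by
    intro h0
    rw [h0] at hn
    simp at hn
    linarith
  obtain ⟨k, hk⟩ : ∃ k, Nat.find hex = k + 1 :=
    ⟨Nat.find hex - 1, (Nat.succ_pred_eq_of_pos (Nat.pos_of_ne_zero hn0)).symm⟩
  have hprev : ¬ (2*δ < 2^k * e2) := Nat.find_min hex (by omega)
  push_neg at hprev
  set n := Nat.find hex with hndef
  have hle4 : 2^n * e2 ≤ 4*δ := by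
    rw [hk, pow_succ]
    nlinarith
  have hNn := claim n hle4
  rw [hNdef] at hNn
  obtain ⟨hc0, hc8, hr20, hr80, hexp, hisog, hinv, hgx, hgy, hhx, hhy, hgz, hhz⟩ := hNn
  -- defect bound: ‖g z - z‖ ≤ 2δ
  have hb1 : ‖(M n).1 z - z‖ ≤ 2*δ := by
    have h1 : ‖z - z‖ < 80*δ - (2^n - 1)*e2 := by simp; linarith
    have h2 : ‖x - z‖ < 80*δ - (2^n - 1)*e2 := by rw [← hδdef]; linarith
    have := (hisog z x h1 h2).1
    rw [hgx] at this
    calc ‖(M n).1 z - z‖ ≤ ‖(M n).1 z - x‖ + ‖x - z‖ := norm_sub_le_norm_sub_add_norm_sub _ _ _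
    _ = ‖z - x‖ + ‖x - z‖ := by rw [this]
    _ = 2*δ := by rw [norm_sub_rev, ← hδdef]; ring
  rw [hgz] at hb1
  -- but defect = 2^n e2 > 2δ
  rw [hk] at hn
  rw [hk] at hb1
  linarith

end Main

-- ===== part 6 =====
open Filter Metric
set_option linter.unusedSectionVars false
set_option maxHeartbeats 1000000

/-- midpoint property plus Lipschitz-type control on an interval forces affinity. -/
lemma dyadic_affine {E : Type*} [NormedAddCommGroup E] [NormedSpace ℝ E]
    {f : ℝ → E} {α β L : ℝ} (hαβ : α < β) (hL : 0 ≤ L)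
    (hiso : ∀ s t, α ≤ s → s ≤ β → α ≤ t → t ≤ β → ‖f s - f t‖ ≤ |s - t| * L)
    (hmid : ∀ s t, α ≤ s → s ≤ β → α ≤ t → t ≤ β → f s + f t = f ((s+t)/2) + f ((s+t)/2)) :
    ∃ p q : E, ∀ s, α ≤ s → s ≤ β → f s = p + s • q := by
  have hba : (0:ℝ) < β - α := by linarith
  set q : E := (β - α)⁻¹ • (f β - f α) with hqdef
  set p : E := f α - α • q with hpdef
  set g : ℝ → E := fun s => f s - p - s • q with hgdef
  refine ⟨p, q, ?_⟩
  have hgα : g α = 0 := by rw [hgdef]; simp only [hpdef]; abel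
  have hgβ : g β = 0 := by
    rw [hgdef]
    simp only [hpdef]
    have h1 : (β:ℝ) • q - α • q = (β - α) • q := by rw [sub_smul]
    have h2 : (β - α) • q = f β - f α := by
      rw [hqdef, smul_smul, mul_inv_cancel₀ (ne_of_gt hba), one_smul]
    have : f β - (f α - α • q) - β • q = f β - f α - ((β:ℝ) • q - α • q) := by abel
    rw [this, h1, h2]
    abel
  have hgmid : ∀ s t, α ≤ s → s ≤ β → α ≤ t → t ≤ β →
      g s + g t = g ((s+t)/2) + g ((s+t)/2) := by
    intro s t hs hs' ht ht'
    have hm := hmid s t hs hs' ht ht'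
    rw [hgdef]
    simp only
    have hq : s • q + t • q = ((s+t)/2) • q + ((s+t)/2) • q := by
      rw [← add_smul, ← add_smul, add_halves]
    have expand : f s - p - s • q + (f t - p - t • q)
        = (f s + f t) - p - p - (s • q + t • q) := by abel
    have expand2 : f ((s+t)/2) - p - ((s+t)/2) • q + (f ((s+t)/2) - p - ((s+t)/2) • q)
        = (f ((s+t)/2) + f ((s+t)/2)) - p - p - (((s+t)/2) • q + ((s+t)/2) • q) := by abel
    rw [expand, expand2, hm, hq]
  -- dyadic points
  set D : ℕ → ℕ → ℝ := fun n k => α + ((k:ℝ)/2^n) * (β - α) with hDdef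
  have hDmem : ∀ n k, k ≤ 2^n → α ≤ D n k ∧ D n k ≤ β := by
    intro n k hk
    have h2n : (0:ℝ) < 2^n := by positivity
    have hk' : (k:ℝ) ≤ 2^n := by exact_mod_cast hk
    constructor
    · rw [hDdef]
      simp only
      have h0 : 0 ≤ (k:ℝ)/2^n * (β - α) :=
        mul_nonneg (div_nonneg (Nat.cast_nonneg k) h2n.le) (by linarith)
      linarith
    · rw [hDdef]
      simp only
      have h1 : (k:ℝ)/2^n ≤ 1 := by
        rw [div_le_one h2n]; exact hk'
      have h2 := mul_le_mul_of_nonneg_right h1 (le_of_lt hba)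
      rw [one_mul] at h2
      linarith
  have hdy : ∀ n : ℕ, ∀ k ≤ 2^n, g (D n k) = 0 := by
    intro n
    induction n with
    | zero =>
      intro k hk
      norm_num at hk
      interval_cases k
      · have : D 0 0 = α := by rw [hDdef]; simp
        rw [this, hgα]
      · have : D 0 1 = β := by rw [hDdef]; simp
        rw [this, hgβ]
    | succ n ih =>
      intro k hk
      have hps : (2:ℕ)^(n+1) = 2 * 2^n := by ring
      rcases Nat.even_or_odd k with ⟨j, hj⟩ | ⟨j, hj⟩
      · -- even
        have hj2 : j ≤ 2^n := by omega
        have heq : D (n+1) k = D n j := by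
          have h2n : (2:ℝ)^n ≠ 0 := by positivity
          rw [hDdef]
          simp only
          rw [hj]
          push_cast
          rw [show ((2:ℝ)^(n+1)) = 2 * 2^n by ring]
          field_simp
          ring
        rw [heq]
        exact ih j hj2
      · -- odd
        have hj2 : j + 1 ≤ 2^n := by omega
        have hj3 : j ≤ 2^n := by omega
        have heq : D (n+1) k = (D n j + D n (j+1))/2 := by
          rw [hDdef]
          simp only
          rw [hj]
          have h2n : (2:ℝ)^n ≠ 0 := by positivity
          push_cast
          rw [show ((2:ℝ)^(n+1)) = 2 * 2^n by ring]
          field_simp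
          ring
        have h1 := hgmid (D n j) (D n (j+1)) (hDmem n j hj3).1 (hDmem n j hj3).2
          (hDmem n (j+1) hj2).1 (hDmem n (j+1) hj2).2
        rw [ih j hj3, ih (j+1) hj2] at h1
        have h2 : g ((D n j + D n (j+1))/2) + g ((D n j + D n (j+1))/2) = 0 := by
          rw [← h1]; simp
        have h3 : (2:ℝ) • g ((D n j + D n (j+1))/2) = 0 := by
          rw [two_smul]; exact h2.symm ▸ h2
        have h4 := smul_eq_zero.1 h3
        rcases h4 with h4|h4
        · norm_num at h4
        · rw [heq]; exact h4
  -- density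
  intro s hs hs'
  have key : g s = 0 := by
    by_contra hne
    have hgs : 0 < ‖g s‖ := norm_pos_iff.2 hne
    set C := (β - α) * (L + ‖q‖ + 1) with hCdef
    have hC : 0 < C := by
      rw [hCdef]
      have : (0:ℝ) ≤ ‖q‖ := norm_nonneg _
      nlinarith
    obtain ⟨n, hn⟩ := exists_pow_lt_of_lt_one (show (0:ℝ) < ‖g s‖/C by positivity)
      (show (1/2:ℝ) < 1 by norm_num)
    -- choose dyadic approximation at level n
    set θ := (s - α)/(β - α) with hθdef
    have hθ0 : 0 ≤ θ := by rw [hθdef]; apply div_nonneg (by linarith) (by linarith)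
    have hθ1 : θ ≤ 1 := by
      rw [hθdef, div_le_one hba]; linarith
    have h2n : (0:ℝ) < 2^n := by positivity
    set k := ⌊θ * 2^n⌋₊ with hkdef
    have hk2 : k ≤ 2^n := by
      rw [hkdef]
      have : θ * 2^n ≤ 2^n := by nlinarith
      calc ⌊θ * 2^n⌋₊ ≤ ⌊(2:ℝ)^n⌋₊ := Nat.floor_le_floor this
      _ = ⌊((2^n : ℕ) : ℝ)⌋₊ := by norm_cast
      _ = 2^n := Nat.floor_natCast _
    have hfl1 : (k:ℝ) ≤ θ * 2^n := Nat.floor_le (by positivity)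
    have hfl2 : θ * 2^n < k + 1 := Nat.lt_floor_add_one _
    have hclose : |s - D n k| ≤ (β - α)/2^n := by
      rw [hDdef]
      simp only
      have hseq : s = α + θ * (β - α) := by
        rw [hθdef]; field_simp; ring
      rw [hseq]
      have : α + θ * (β - α) - (α + (k:ℝ)/2^n * (β - α)) = (θ - (k:ℝ)/2^n) * (β - α) := by ring
      rw [this, abs_mul, abs_of_nonneg (by linarith : (0:ℝ) ≤ β - α)]
      have h1 : 0 ≤ θ - (k:ℝ)/2^n := by
        rw [sub_nonneg, div_le_iff₀ h2n]; exact hfl1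
      have h2 : θ - (k:ℝ)/2^n ≤ 1/2^n := by
        rw [sub_le_iff_le_add, ← add_div, le_div_iff₀ h2n]
        linarith
      rw [abs_of_nonneg h1]
      calc (θ - (k:ℝ)/2^n) * (β - α) ≤ (1/2^n) * (β - α) :=
            mul_le_mul_of_nonneg_right h2 (by linarith)
      _ = (β - α)/2^n := by ring
    have hDk := hDmem n k hk2
    have hgD := hdy n k hk2
    have hbound : ‖g s‖ ≤ |s - D n k| * (L + ‖q‖) := by
      have : g s = g s - g (D n k) := by rw [hgD]; abel
      rw [this, hgdef]
      simp only
      have expand : f s - p - s • q - (f (D n k) - p - (D n k) • q)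
          = (f s - f (D n k)) - (s - D n k) • q := by
        rw [sub_smul]; abel
      rw [expand]
      calc ‖(f s - f (D n k)) - (s - D n k) • q‖
          ≤ ‖f s - f (D n k)‖ + ‖(s - D n k) • q‖ := norm_sub_le _ _
      _ ≤ |s - D n k| * L + |s - D n k| * ‖q‖ := by
          apply add_le_add (hiso s (D n k) hs hs' hDk.1 hDk.2)
          rw [norm_smul, Real.norm_eq_abs]
      _ = |s - D n k| * (L + ‖q‖) := by ring
    have hfinal : ‖g s‖ < ‖g s‖ := by
      calc ‖g s‖ ≤ |s - D n k| * (L + ‖q‖) := hbound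
      _ ≤ ((β - α)/2^n) * (L + ‖q‖) := by
          apply mul_le_mul_of_nonneg_right hclose (by positivity)
      _ ≤ C * (1/2)^n := by
          rw [hCdef]
          rw [div_pow, one_pow]
          rw [show (β - α) * (L + ‖q‖ + 1) * (1/2^n) = ((β-α)/2^n) * (L + ‖q‖ + 1) by ring]
          apply mul_le_mul_of_nonneg_left (by linarith) (by positivity)
      _ < C * (‖g s‖/C) := by
          apply mul_lt_mul_of_pos_left hn hC
      _ = ‖g s‖ := by field_simp
    exact absurd hfinal (lt_irrefl _)
  have hkey : f s - p - s • q = 0 := key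
  have h3 : f s - (p + s • q) = 0 := by
    have h4 : f s - (p + s • q) = f s - p - s • q := by abel
    rw [h4]; exact hkey
  exact sub_eq_zero.1 h3

-- ===== part 7 =====
open Filter Metric
set_option linter.unusedSectionVars false
set_option maxHeartbeats 1000000

section Main

variable {A B : Type*} [NormedRing A] [NormedAlgebra ℂ A] [CompleteSpace A]
    [NormedRing B] [NormedAlgebra ℂ B] [CompleteSpace B]
    {𝔄 : Set A} {𝔅 : Set B} {T : A → B} {S : B → A} {u₀ : B}

lemma real_smul_eq {E : Type*} [NormedRing E] [NormedAlgebra ℂ E] (r : ℝ) (v : E) :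
    ((r:ℝ):ℂ) • v = r • v := by
  rw [← smul_one_smul ℂ r v]
  congr 1
  rw [Complex.real_smul, mul_one]

lemma key1
    (h𝔄unit : ∀ a ∈ 𝔄, IsUnit a) (h𝔄one : (1 : A) ∈ 𝔄)
    (h𝔄mul : ∀ a ∈ 𝔄, ∀ b ∈ 𝔄, a * b ∈ 𝔄) (h𝔄open : IsOpen 𝔄)
    (h𝔅unit : ∀ b ∈ 𝔅, IsUnit b) (h𝔅one : (1 : B) ∈ 𝔅)
    (h𝔅mul : ∀ a ∈ 𝔅, ∀ b ∈ 𝔅, a * b ∈ 𝔅) (h𝔅open : IsOpen 𝔅)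
    (hmaps : Set.MapsTo T 𝔄 𝔅)
    (hiso : ∀ a ∈ 𝔄, ∀ b ∈ 𝔄, ‖T a - T b‖ = ‖a - b‖)
    (hS1 : ∀ b ∈ 𝔅, S b ∈ 𝔄) (hS2 : ∀ b ∈ 𝔅, T (S b) = b) (hS3 : ∀ a ∈ 𝔄, S (T a) = a)
    (hu₀ : Filter.Tendsto T (nhdsWithin 0 𝔄) (nhds u₀)) :
    ∀ c ∈ 𝔅, u₀ + c ∈ 𝔅 := by
  intro c hc
  set x₀ := S c with hx₀def
  have hx₀A : x₀ ∈ 𝔄 := hS1 _ hc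
  obtain ⟨r₀, hr₀, hball₀⟩ := exists_ball_subset h𝔄unit h𝔄mul h𝔄open h𝔄one hx₀A
  set ρ : ℝ := min (r₀/(400*(‖x₀‖+1))) (1/4) with hρdef
  have hρ0 : 0 < ρ := by
    apply lt_min (by positivity) (by norm_num)
  have hρ4 : ρ ≤ 1/4 := min_le_right _ _
  have hρr : 400*ρ*(‖x₀‖+1) ≤ r₀ := by
    have h1 : ρ ≤ r₀/(400*(‖x₀‖+1)) := min_le_left _ _
    have h2 : (0:ℝ) < 400*(‖x₀‖+1) := by positivity
    calc 400*ρ*(‖x₀‖+1) = ρ * (400*(‖x₀‖+1)) := by ring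
    _ ≤ (r₀/(400*(‖x₀‖+1))) * (400*(‖x₀‖+1)) := by
        exact mul_le_mul_of_nonneg_right h1 h2.le
    _ = r₀ := by field_simp
  set η : ℝ → B := fun t => T (((t:ℝ):ℂ) • x₀) with hηdef
  have hmemray : ∀ t : ℝ, 0 < t → ((t:ℝ):ℂ) • x₀ ∈ 𝔄 := by
    intro t ht
    apply smul_mem' h𝔄unit h𝔄mul h𝔄open h𝔄one _ hx₀A
    exact_mod_cast (ne_of_gt ht)
  have hηiso : ∀ s t : ℝ, 0 < s → 0 < t → ‖η s - η t‖ = |s - t| * ‖x₀‖ := by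
    intro s t hs ht
    rw [hηdef]
    simp only
    rw [hiso _ (hmemray s hs) _ (hmemray t ht), ← sub_smul]
    rw [show ((s:ℂ) - (t:ℂ)) = (((s - t : ℝ)):ℂ) by push_cast; ring]
    rw [norm_smul, Complex.norm_real, Real.norm_eq_abs]
  have hscale : ∀ m : ℝ, 0 < m → Metric.ball (((m:ℝ):ℂ) • x₀) (m * r₀) ⊆ 𝔄 := by
    intro m hm w hw
    rw [Metric.mem_ball, dist_eq_norm] at hw
    have hm' : ((m:ℝ):ℂ) ≠ 0 := by exact_mod_cast (ne_of_gt hm)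
    have h1 : ((m⁻¹:ℝ):ℂ) • w ∈ Metric.ball x₀ r₀ := by
      rw [Metric.mem_ball, dist_eq_norm]
      have heq : ((m⁻¹:ℝ):ℂ) • w - x₀ = ((m⁻¹:ℝ):ℂ) • (w - ((m:ℝ):ℂ) • x₀) := by
        rw [smul_sub, smul_smul]
        congr 2
        rw [show ((m⁻¹:ℝ):ℂ) * ((m:ℝ):ℂ) = (((m⁻¹ * m : ℝ)):ℂ) by push_cast; ring]
        rw [inv_mul_cancel₀ (ne_of_gt hm)]
        simp
      rw [heq, norm_smul]
      rw [Complex.norm_real, Real.norm_eq_abs, abs_of_pos (by positivity)]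
      calc m⁻¹ * ‖w - ((m:ℝ):ℂ) • x₀‖ < m⁻¹ * (m * r₀) := by
            apply mul_lt_mul_of_pos_left hw (by positivity)
      _ = r₀ := by field_simp
    have h2 := hball₀ h1
    have h3 := smul_mem' h𝔄unit h𝔄mul h𝔄open h𝔄one hm' h2
    rwa [smul_smul, show ((m:ℝ):ℂ) * ((m⁻¹:ℝ):ℂ) = 1 by
      rw [show ((m:ℝ):ℂ) * ((m⁻¹:ℝ):ℂ) = (((m * m⁻¹ : ℝ)):ℂ) by push_cast; ring,
        mul_inv_cancel₀ (ne_of_gt hm)]; simp, one_smul] at h3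
  -- window midpoint property
  have hwin_mid : ∀ τ s t : ℝ, 0 < τ → τ*(1-ρ) ≤ s → s ≤ τ*(1+ρ) → τ*(1-ρ) ≤ t → t ≤ τ*(1+ρ) →
      η s + η t = η ((s+t)/2) + η ((s+t)/2) := by
    intro τ s t hτ hs1 hs2 ht1 ht2
    have hρ1 : (0:ℝ) < 1 - ρ := by linarith
    have hspos : 0 < s := lt_of_lt_of_le (by positivity) hs1
    have htpos : 0 < t := lt_of_lt_of_le (by positivity) ht1
    set mm := (s+t)/2 with hmmdef
    have hmpos : 0 < mm := by rw [hmmdef]; positivity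
    set z : A := ((mm:ℝ):ℂ) • x₀ with hzdef
    set x : A := ((s:ℝ):ℂ) • x₀ with hxdef
    have hy : z + z - x = ((t:ℝ):ℂ) • x₀ := by
      rw [hzdef, hxdef, ← add_smul, ← sub_smul]
      congr 1
      push_cast
      rw [hmmdef]
      push_cast
      ring
    by_cases hxz : x = z
    · -- degenerate
      have hyz : z + z - x = z := by rw [hxz]; exact add_sub_cancel_right z z
      show T x + T (((t:ℝ):ℂ) • x₀) = T (((mm:ℝ):ℂ) • x₀) + T (((mm:ℝ):ℂ) • x₀)
      rw [← hy, hyz, hxz, ← hzdef]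
    · have hδb : 100 * ‖x - z‖ ≤ mm * r₀ := by
        have h1 : ‖x - z‖ = |s - mm| * ‖x₀‖ := by
          rw [hxdef, hzdef, ← sub_smul,
            show ((s:ℂ) - (mm:ℂ)) = (((s - mm : ℝ)):ℂ) by push_cast; ring,
            norm_smul, Complex.norm_real, Real.norm_eq_abs]
        have h2 : |s - mm| ≤ τ*ρ := by
          rw [hmmdef, abs_le]
          constructor <;> nlinarith
        have h3 : mm ≥ τ*(1-ρ) := by rw [hmmdef]; linarith
        have h4 : ‖x₀‖ ≤ ‖x₀‖ + 1 := by linarith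
        calc 100 * ‖x - z‖ = 100 * (|s - mm| * ‖x₀‖) := by rw [h1]
        _ ≤ 100 * ((τ*ρ) * (‖x₀‖+1)) := by
            apply mul_le_mul_of_nonneg_left _ (by norm_num)
            apply mul_le_mul h2 h4 (norm_nonneg _) (by positivity)
        _ = τ * (100*ρ*(‖x₀‖+1)) := by ring
        _ ≤ τ * (r₀/4) := by
            apply mul_le_mul_of_nonneg_left _ hτ.le
            nlinarith
        _ ≤ (τ*(1-ρ)) * r₀ := by
            have h5 : (0:ℝ) ≤ τ * r₀ := by positivity
            nlinarith [mul_nonneg h5 (show (0:ℝ) ≤ 3/4 - ρ by linarith)]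
        _ ≤ mm * r₀ := by nlinarith
      have hball : Metric.ball z (100 * ‖x - z‖) ⊆ 𝔄 := by
        apply Set.Subset.trans (Metric.ball_subset_ball hδb)
        rw [hzdef]
        exact hscale mm hmpos
      have := midpoint_key hmaps h𝔅open hiso hS1 hS2 hS3 hball hxz
      rw [hy] at this
      exact this
  -- window affinity
  have hwin_aff : ∀ τ : ℝ, 0 < τ → ∃ p q : B,
      ∀ s, τ*(1-ρ) ≤ s → s ≤ τ*(1+ρ) → η s = p + s • q := by
    intro τ hτ
    apply dyadic_affine (L := ‖x₀‖) (by nlinarith) (norm_nonneg _)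
    · intro s t hs1 hs2 ht1 ht2
      have hρ1 : (0:ℝ) < 1 - ρ := by linarith
      have hspos : 0 < s := lt_of_lt_of_le (by positivity) hs1
      have htpos : 0 < t := lt_of_lt_of_le (by positivity) ht1
      rw [hηiso s t hspos htpos]
    · intro s t hs1 hs2 ht1 ht2
      exact hwin_mid τ s t hτ hs1 hs2 ht1 ht2
  -- master affine data from the window at 1
  obtain ⟨p₁, q₁, hmaster⟩ := hwin_aff 1 one_pos
  rw [one_mul, one_mul] at hmaster
  -- glue downward
  have hglue : ∀ t : ℝ, 0 < t → t ≤ 1 → η t = p₁ + t • q₁ := by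
    have hQQ : ∀ t, 0 < t → t ≤ 1 - ρ → (∀ s, t ≤ s → s ≤ 1 → η s = p₁ + s • q₁) := by
      apply real_induction_down (Q := fun t => ∀ s, t ≤ s → s ≤ 1 → η s = p₁ + s • q₁)
        (by linarith : (0:ℝ) < 1 - ρ)
      · -- base
        intro s hs1 hs2
        exact hmaster s (by linarith) (by linarith)
      · -- mono
        intro s t hst ht1 hs0 hQ s' hs' hs'1
        exact hQ s' (by linarith) hs'1
      · -- open
        intro t ht0 ht1 hQ
        obtain ⟨p, q, hw⟩ := hwin_aff t ht0
        have htw1 : t*(1-ρ) ≤ t := by nlinarith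
        have htw2 : t ≤ t*(1+ρ) := by nlinarith
        have htp : t < t*(1+ρ) := by nlinarith
        have htp1 : t*(1+ρ) ≤ 1 := by nlinarith
        have he1 : p + t • q = p₁ + t • q₁ := by
          rw [← hw t htw1 htw2]
          exact hQ t le_rfl (by linarith)
        have he2 : p + (t*(1+ρ)) • q = p₁ + (t*(1+ρ)) • q₁ := by
          rw [← hw (t*(1+ρ)) (by nlinarith) le_rfl]
          exact hQ (t*(1+ρ)) htp.le htp1
        have hqq : q = q₁ := by
          have h3 : (t*(1+ρ) - t) • q = (t*(1+ρ) - t) • q₁ := by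
            have := congrArg (fun u => u - (p + t • q)) he2
            rw [show p + (t*(1+ρ)) • q - (p + t • q) = (t*(1+ρ)) • q - t • q by abel,
              ← sub_smul] at this
            rw [this, he1]
            rw [show p₁ + (t*(1+ρ)) • q₁ - (p₁ + t • q₁) = (t*(1+ρ)) • q₁ - t • q₁ by abel,
              ← sub_smul]
          exact smul_right_injective B (show (t*(1+ρ) - t) ≠ 0 by nlinarith) h3
        have hpp : p = p₁ := by
          have := he1
          rw [hqq] at this
          exact add_right_cancel this
        refine ⟨t*ρ, by positivity, fun s hs1 hs2 hs3 s' hs' hs'1 => ?_⟩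
        rcases le_or_gt s' t with h'|h'
        · rw [← hpp, ← hqq]
          exact hw s' (by nlinarith) (by nlinarith)
        · exact hQ s' h'.le hs'1
      · -- limit
        intro t ht0 ht1 hQ s' hs' hs'1
        rcases lt_or_eq_of_le hs' with h'|h'
        · rcases le_or_gt s' (1-ρ) with h''|h''
          · exact hQ s' h' h'' s' le_rfl hs'1
          · exact hmaster s' (by linarith) (by linarith)
        · -- t = t : continuity
          rw [← h'] at hs'1 ⊢
          by_contra hne
          set ε := ‖η t - (p₁ + t • q₁)‖ with hεdef
          have hε : 0 < ε := by
            rw [hεdef, norm_pos_iff, sub_ne_zero]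
            exact hne
          set ε' := ε / (‖x₀‖ + ‖q₁‖ + 1) with hε'def
          have hε' : 0 < ε' := by rw [hε'def]; positivity
          rcases lt_or_eq_of_le ht1 with hlt|heqq
          · set u := min (1-ρ) (t + ε') with hudef
            have hu1 : t < u := by
              rw [hudef]
              apply lt_min hlt (by linarith)
            have hu2 : u ≤ 1 - ρ := min_le_left _ _
            have hu3 : u - t ≤ ε' := by
              have := min_le_right (1-ρ) (t + ε')
              rw [hudef]
              linarith [min_le_right (1-ρ) (t + ε')]
            have hη_u : η u = p₁ + u • q₁ := hQ u hu1 hu2 u le_rfl (by linarith)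
            have hb : ε ≤ (u - t) * (‖x₀‖ + ‖q₁‖) := by
              rw [hεdef]
              calc ‖η t - (p₁ + t • q₁)‖
                  ≤ ‖η t - η u‖ + ‖η u - (p₁ + t • q₁)‖ := norm_sub_le_norm_sub_add_norm_sub _ _ _
              _ = |t - u| * ‖x₀‖ + ‖(p₁ + u • q₁) - (p₁ + t • q₁)‖ := by
                  rw [hηiso t u ht0 (by linarith), hη_u]
              _ = (u - t) * ‖x₀‖ + ‖(u - t) • q₁‖ := by
                  rw [abs_sub_comm, abs_of_pos (by linarith),
                    show p₁ + u • q₁ - (p₁ + t • q₁) = u • q₁ - t • q₁ by abel, ← sub_smul]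
              _ = (u - t) * ‖x₀‖ + (u - t) * ‖q₁‖ := by
                  rw [norm_smul, Real.norm_eq_abs, abs_of_pos (by linarith)]
              _ = (u - t) * (‖x₀‖ + ‖q₁‖) := by ring
            have : ε ≤ ε' * (‖x₀‖ + ‖q₁‖) := by
              calc ε ≤ (u - t) * (‖x₀‖ + ‖q₁‖) := hb
              _ ≤ ε' * (‖x₀‖ + ‖q₁‖) := by
                  apply mul_le_mul_of_nonneg_right (by linarith) (by positivity)
            have hcontra : ε' * (‖x₀‖ + ‖q₁‖) < ε := by
              rw [hε'def]
              rw [div_mul_eq_mul_div, div_lt_iff₀ (by positivity)]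
              nlinarith [norm_nonneg x₀, norm_nonneg q₁]
            linarith
          · -- t = 1 - ρ
            rw [heqq] at hne
            exact hne (hmaster (1-ρ) le_rfl (by linarith))
    intro t ht0 ht1
    rcases le_or_gt t (1-ρ) with h|h
    · exact hQQ t ht0 h t le_rfl ht1
    · exact hmaster t (by linarith) (by linarith)
  -- identify p₁ with u₀ via the limit
  have hηtend : Tendsto η (nhdsWithin 0 (Set.Ioi (0:ℝ))) (nhds u₀) := by
    apply hu₀.comp
    rw [tendsto_nhdsWithin_iff]
    constructor
    · apply tendsto_nhdsWithin_of_tendsto_nhds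
      have hcont : Continuous (fun t : ℝ => ((t:ℝ):ℂ) • x₀) := by
        apply Continuous.smul _ continuous_const
        exact Complex.continuous_ofReal
      have := hcont.tendsto 0
      simpa using this
    · filter_upwards [self_mem_nhdsWithin] with t ht
      exact hmemray t ht
  have hafftend : Tendsto (fun t : ℝ => p₁ + t • q₁) (nhdsWithin 0 (Set.Ioi (0:ℝ))) (nhds p₁) := by
    apply tendsto_nhdsWithin_of_tendsto_nhds
    have hcont : Continuous (fun t : ℝ => p₁ + t • q₁) := by
      apply continuous_const.add (continuous_id.smul continuous_const)
    have := hcont.tendsto 0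
    simpa using this
  have hp₁ : p₁ = u₀ := by
    have hev : ∀ᶠ t in nhdsWithin (0:ℝ) (Set.Ioi 0), η t = p₁ + t • q₁ := by
      have h1 : ∀ᶠ t in nhdsWithin (0:ℝ) (Set.Ioi 0), t < 1 :=
        eventually_nhdsWithin_of_eventually_nhds (eventually_nhds_iff.2
          ⟨Set.Iio 1, fun x hx => hx, isOpen_Iio, by norm_num⟩)
      have h2 : ∀ᶠ t in nhdsWithin (0:ℝ) (Set.Ioi 0), 0 < t := self_mem_nhdsWithin
      filter_upwards [h1, h2] with t h1t h2t
      exact hglue t h2t h1t.le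
    have := hηtend.congr' (hev.mono (fun t ht => ht))
    exact (tendsto_nhds_unique this hafftend).symm
  -- η 1 = c gives q₁
  have hη1 : η 1 = c := by
    rw [hηdef]
    simp only [Complex.ofReal_one, one_smul]
    exact hS2 _ hc
  have hc_eq : p₁ + q₁ = c := by
    have := hglue 1 one_pos le_rfl
    rw [hη1, one_smul] at this
    exact this.symm
  -- conclude
  have hhalf : η (1/2) ∈ 𝔅 := hmaps (hmemray (1/2) (by norm_num))
  have hval : η (1/2) = p₁ + (1/2 : ℝ) • q₁ := hglue (1/2) (by norm_num) (by norm_num)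
  have hfinal : u₀ + c = (2:ℝ) • η (1/2) := by
    rw [hval, smul_add, smul_smul]
    norm_num
    rw [show (2:ℝ) • p₁ = p₁ + p₁ by rw [two_smul]]
    rw [← hp₁, ← hc_eq]
    abel
  rw [hfinal, ← real_smul_eq]
  apply smul_mem' h𝔅unit h𝔅mul h𝔅open h𝔅one _ hhalf
  norm_num

end Main

-- ===== part 8 =====
open Filter Metric
set_option linter.unusedSectionVars false
set_option maxHeartbeats 1000000

/-- For a surjective isometry `T` between open subgroups of the invertible
groups of unital complex Banach algebras, the limit `lim_{𝔄 ∋ a → 0} T(a)`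
exists and lies in the Jacobson radical of `B`. -/
theorem isometry_of_open_subgroups_tendsto_radical
    {A B : Type*} [NormedRing A] [NormedAlgebra ℂ A] [CompleteSpace A]
    [NormedRing B] [NormedAlgebra ℂ B] [CompleteSpace B]
    (𝔄 : Set A) (𝔅 : Set B)
    (h𝔄unit : ∀ a ∈ 𝔄, IsUnit a) (h𝔄one : (1 : A) ∈ 𝔄)
    (h𝔄mul : ∀ a ∈ 𝔄, ∀ b ∈ 𝔄, a * b ∈ 𝔄)
    (h𝔄inv : ∀ a ∈ 𝔄, Ring.inverse a ∈ 𝔄) (h𝔄open : IsOpen 𝔄)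
    (h𝔅unit : ∀ b ∈ 𝔅, IsUnit b) (h𝔅one : (1 : B) ∈ 𝔅)
    (h𝔅mul : ∀ a ∈ 𝔅, ∀ b ∈ 𝔅, a * b ∈ 𝔅)
    (h𝔅inv : ∀ b ∈ 𝔅, Ring.inverse b ∈ 𝔅) (h𝔅open : IsOpen 𝔅)
    (T : A → B) (hmaps : Set.MapsTo T 𝔄 𝔅) (hsurj : Set.SurjOn T 𝔄 𝔅)
    (hiso : ∀ a ∈ 𝔄, ∀ b ∈ 𝔄, ‖T a - T b‖ = ‖a - b‖) :
    ∃ u₀ ∈ Ideal.jacobson (⊥ : Ideal B),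
      Filter.Tendsto T (nhdsWithin 0 𝔄) (nhds u₀) := by
  classical
  obtain ⟨S, hS1, hS2, hS3⟩ := exists_inverse_map hmaps hsurj hiso
  obtain ⟨u₀, hu₀⟩ := exists_limit h𝔄unit h𝔄one h𝔄mul h𝔄open hiso
  have K1 := key1 h𝔄unit h𝔄one h𝔄mul h𝔄open h𝔅unit h𝔅one h𝔅mul h𝔅open hmaps hiso
    hS1 hS2 hS3 hu₀
  -- quasinilpotency-type statement
  have K2 : ∀ b ∈ 𝔅, ∀ μ : ℂ, μ ≠ 0 → IsUnit (u₀ * b + μ • (1:B)) := by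
    intro b hb μ hμ
    have hbinv : Ring.inverse b ∈ 𝔅 := h𝔅inv b hb
    have h1 : μ • Ring.inverse b ∈ 𝔅 := smul_mem' h𝔅unit h𝔅mul h𝔅open h𝔅one hμ hbinv
    have h2 : u₀ + μ • Ring.inverse b ∈ 𝔅 := K1 _ h1
    have h4 : (u₀ + μ • Ring.inverse b) * b = u₀ * b + μ • (1:B) := by
      rw [add_mul, smul_mul_assoc, Ring.inverse_mul_cancel _ (h𝔅unit b hb)]
    rw [← h4]
    exact (h𝔅unit _ h2).mul (h𝔅unit b hb)
  have K3 : ∀ y : B, IsUnit (1 - u₀ * y) := by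
    intro y
    set lam : ℂ := ((‖y‖ + 1 : ℝ) : ℂ) with hlamdef
    have hlampos : (0:ℝ) < ‖y‖ + 1 := by positivity
    have hlam0 : lam ≠ 0 := by
      rw [hlamdef]
      exact_mod_cast (ne_of_gt hlampos)
    have hnormlam : ‖lam‖ = ‖y‖ + 1 := by
      rw [hlamdef, Complex.norm_real, Real.norm_eq_abs, abs_of_pos hlampos]
    have hsmall : ‖lam⁻¹ • y‖ < 1 := by
      rw [norm_smul, norm_inv, hnormlam]
      rw [inv_mul_lt_iff₀ hlampos, mul_one]
      linarith
    have h5 : (1:B) - lam⁻¹ • y ∈ 𝔅 := one_sub_mem h𝔅unit h𝔅mul h𝔅open h𝔅one hsmall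
    have h6 : (-lam) • ((1:B) - lam⁻¹ • y) ∈ 𝔅 :=
      smul_mem' h𝔅unit h𝔅mul h𝔅open h𝔅one (neg_ne_zero.2 hlam0) h5
    have heq : (-lam) • ((1:B) - lam⁻¹ • y) = y - lam • 1 := by
      rw [smul_sub, smul_smul]
      rw [show (-lam) * lam⁻¹ = -1 by field_simp]
      rw [neg_smul, neg_smul, one_smul]
      abel
    rw [heq] at h6
    set b : B := y - lam • 1 with hbdef
    have hbB : b ∈ 𝔅 := h6
    have hbinv : Ring.inverse b ∈ 𝔅 := h𝔅inv b hbB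
    have h7 : (-1:ℂ) • Ring.inverse b ∈ 𝔅 :=
      smul_mem' h𝔅unit h𝔅mul h𝔅open h𝔅one (by norm_num) hbinv
    have h8 : u₀ + (-1:ℂ) • Ring.inverse b ∈ 𝔅 := K1 _ h7
    have h9 : (-1:ℂ) • (u₀ + (-1:ℂ) • Ring.inverse b) ∈ 𝔅 :=
      smul_mem' h𝔅unit h𝔅mul h𝔅open h𝔅one (by norm_num) h8
    have h9eq : (-1:ℂ) • (u₀ + (-1:ℂ) • Ring.inverse b) = Ring.inverse b - u₀ := by
      rw [smul_add, smul_smul, neg_one_mul, neg_neg, one_smul, neg_one_smul]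
      abel
    rw [h9eq] at h9
    have h10 : (Ring.inverse b - u₀) * b ∈ 𝔅 := h𝔅mul _ h9 _ hbB
    have h10eq : (Ring.inverse b - u₀) * b = 1 - u₀ * b := by
      rw [sub_mul, Ring.inverse_mul_cancel _ (h𝔅unit b hbB)]
    rw [h10eq] at h10
    have hwu : IsUnit ((1:B) - u₀ * b) := h𝔅unit _ h10
    set w : B := Ring.inverse (1 - u₀ * b) with hwdef
    have hwB : w ∈ 𝔅 := h𝔅inv _ h10
    -- quasinilpotency of u₀ * w
    have hq1 : IsUnit (u₀ * w + (-lam⁻¹) • (1:B)) :=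
      K2 w hwB (-lam⁻¹) (neg_ne_zero.2 (inv_ne_zero hlam0))
    have hq2 : IsUnit ((-lam) • (u₀ * w + (-lam⁻¹) • (1:B))) :=
      isUnit_smul_of_ne_zero (neg_ne_zero.2 hlam0) hq1
    have hq3 : (-lam) • (u₀ * w + (-lam⁻¹) • (1:B)) = 1 - lam • (u₀ * w) := by
      rw [smul_add, smul_smul]
      rw [show (-lam) * (-lam⁻¹) = 1 by field_simp]
      rw [neg_smul, one_smul]
      abel
    rw [hq3] at hq2
    -- swap
    have hq4 : IsUnit (1 - lam • (w * u₀)) := by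
      have h1 : (1:B) - lam • (u₀ * w) = 1 - (lam • u₀) * w := by
        rw [smul_mul_assoc]
      have h2 : (1:B) - w * (lam • u₀) = 1 - lam • (w * u₀) := by
        rw [mul_smul_comm]
      rw [h1] at hq2
      rw [← h2]
      exact isUnit_one_sub_comm hq2
    -- factorization
    have hfact : 1 - u₀ * y = (1 - u₀ * b) * (1 - lam • (w * u₀)) := by
      have hib : (1 - u₀ * b) * w = 1 := Ring.mul_inverse_cancel _ hwu
      have h1 : (1 - u₀ * b) * (1 - lam • (w * u₀))
          = (1 - u₀ * b) - lam • (((1 - u₀ * b) * w) * u₀) := by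
        rw [mul_sub, mul_one, mul_smul_comm, mul_assoc]
      rw [h1, hib, one_mul]
      have hy : y = b + lam • 1 := by rw [hbdef]; abel
      rw [hy, mul_add, mul_smul_comm, mul_one]
      abel
    rw [hfact]
    exact hwu.mul hq4
  have K4 : ∀ y : B, IsUnit (1 - y * u₀) := fun y => isUnit_one_sub_comm (K3 y)
  -- Jacobson radical membership
  refine ⟨u₀, ?_, hu₀⟩
  have hjac : Ideal.jacobson (⊥ : Ideal B) = sInf {J : Ideal B | ⊥ ≤ J ∧ J.IsMaximal} := rfl
  rw [hjac, Ideal.mem_sInf]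
  rintro J ⟨hJle, hJmax⟩
  by_contra hu₀J
  have hlt : J < J ⊔ Submodule.span B {u₀} := by
    apply lt_of_le_of_ne le_sup_left
    intro heq
    apply hu₀J
    rw [heq]
    exact Submodule.mem_sup_right (Submodule.mem_span_singleton_self u₀)
  have htop : J ⊔ Submodule.span B {u₀} = ⊤ := hJmax.out.2 _ hlt
  have h1mem : (1:B) ∈ J ⊔ Submodule.span B {u₀} := by rw [htop]; exact Submodule.mem_top
  obtain ⟨mJ, hmJ, sp, hsp, hsum⟩ := Submodule.mem_sup.1 h1mem
  obtain ⟨r, hr⟩ := Submodule.mem_span_singleton.1 hsp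
  have hmJ_eq : mJ = 1 - r * u₀ := by
    rw [← hsum, ← hr, smul_eq_mul]
    abel
  have hunit := K4 r
  rw [← hmJ_eq] at hunit
  exact hJmax.ne_top (J.eq_top_of_isUnit_mem hmJ hunit)
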